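/- Let γ, σ² : [0,1] → ℝ be continuous with σ²(u) > 0 for all u ∈ [0,1] (condition (UE)), let Γ(u) := ∫₀^u γ(v) dv, g := ∫₀¹ γ(v) dv, assume (E1): Γ(u) − g·u > 0 for all u ∈ (0,1), let Ψ(u) := ∫_{1/2}^u σ²(v)/(2(Γ(v) − g·v)) dv, and let p_c := 2(g − γ(1))/σ²(1). If p_c > 0, then for every p with 0 ≤ p < p_c one has Z̄^p := ∫₀¹ exp(p·Ψ(u)) du < +∞. -/

import Mathlib

open MeasureTheory Set Filter Topology

/-- `Γ(u) = ∫₀^u γ(v) dv`. -/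
noncomputable def Gam (γ : ℝ → ℝ) (u : ℝ) : ℝ := ∫ v in (0:ℝ)..u, γ v

/-- market mean growth rate `g = ∫₀¹ γ(v) dv`. -/
noncomputable def mg (γ : ℝ → ℝ) : ℝ := ∫ v in (0:ℝ)..1, γ v

/-- `Ψ(u) = ∫_{1/2}^u σ²(v) / (2 (Γ(v) - g v)) dv`. -/
noncomputable def Psi (γ σ2 : ℝ → ℝ) (u : ℝ) : ℝ :=
  ∫ v in (1/2:ℝ)..u, σ2 v / (2 * (Gam γ v - mg γ * v))

/-- critical diversity index `p_c = 2 (g - γ(1)) / σ²(1)`. -/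
noncomputable def pcrit (γ σ2 : ℝ → ℝ) : ℝ := 2 * (mg γ - γ 1) / σ2 1

/-- critical index `q_c = 2 (γ(0) - g) / σ²(0)`. -/
noncomputable def qcrit (γ σ2 : ℝ → ℝ) : ℝ := 2 * (γ 0 - mg γ) / σ2 0

set_option maxHeartbeats 1000000 in
/-- under (UE) and (E1), if p_c > 0 then for every 0 ≤ p < p_c,
Z̄^p = ∫₀¹ exp(p Ψ(u)) du < +∞. -/
theorem stmt7 (γ σ2 : ℝ → ℝ) (hγc : ContinuousOn γ (Set.Icc 0 1))
    (hσc : ContinuousOn σ2 (Set.Icc 0 1)) (hUE : ∀ u ∈ Set.Icc (0:ℝ) 1, 0 < σ2 u)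
    (hE1 : ∀ u ∈ Set.Ioo (0:ℝ) 1, 0 < Gam γ u - mg γ * u)
    (hpc : 0 < pcrit γ σ2) :
    ∀ p : ℝ, 0 ≤ p → p < pcrit γ σ2 →
      (∫⁻ u in Set.Ioo (0:ℝ) 1, ENNReal.ofReal (Real.exp (p * Psi γ σ2 u))) < ⊤ := by
  intro p hp0 hppc
  have hσ1 : 0 < σ2 1 := hUE 1 (by norm_num)
  -- c1 = mg γ - γ 1 > 0
  have hc1 : 0 < mg γ - γ 1 := by
    have h := mul_pos hpc hσ1
    rw [pcrit, div_mul_cancel₀ _ hσ1.ne'] at h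
    linarith
  set c1 : ℝ := mg γ - γ 1 with hc1def
  -- interval integrability of γ on subintervals of [0,1]
  have hγint : ∀ a b : ℝ, 0 ≤ a → a ≤ b → b ≤ 1 → IntervalIntegrable γ volume a b := by
    intro a b ha hab hb
    exact (hγc.mono (by rw [uIcc_of_le hab]; exact Icc_subset_Icc ha hb)).intervalIntegrable
  -- the integrand of Psi
  set f₀ : ℝ → ℝ := fun v => σ2 v / (2 * (Gam γ v - mg γ * v)) with hf₀def
  have hPsi : ∀ u : ℝ, Psi γ σ2 u = ∫ v in (1/2:ℝ)..u, f₀ v := by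
    intro u; rw [hf₀def]; rfl
  -- continuity of Gam
  have hGamc : ContinuousOn (Gam γ) (Icc 0 1) := by
    have hi : IntegrableOn γ (uIcc (0:ℝ) 1) volume := by
      rw [uIcc_of_le zero_le_one]; exact hγc.integrableOn_Icc
    have := intervalIntegral.continuousOn_primitive_interval (a := (0:ℝ)) (b := 1) hi
    rwa [uIcc_of_le zero_le_one] at this
  have hDc : ContinuousOn (fun v => Gam γ v - mg γ * v) (Icc 0 1) :=
    hGamc.sub ((continuous_const.mul continuous_id).continuousOn)
  have hf₀c : ∀ a b : ℝ, 0 < a → b < 1 → ContinuousOn f₀ (Icc a b) := by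
    intro a b ha hb
    have hsub : Icc a b ⊆ Icc 0 1 := Icc_subset_Icc (le_of_lt ha) (le_of_lt hb)
    have hsub' : Icc a b ⊆ Ioo 0 1 := fun x hx => ⟨lt_of_lt_of_le ha hx.1, lt_of_le_of_lt hx.2 hb⟩
    exact (hσc.mono hsub).div ((continuousOn_const.mul (hDc.mono hsub)))
      (fun x hx => by have := hE1 x (hsub' hx); positivity)
  have hf₀int : ∀ a b : ℝ, 0 < a → a ≤ b → b < 1 → IntervalIntegrable f₀ volume a b := by
    intro a b ha hab hb
    exact ((hf₀c a b ha hb).mono (by rw [uIcc_of_le hab])).intervalIntegrable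
  have hf₀nn : ∀ v ∈ Ioo (0:ℝ) 1, 0 ≤ f₀ v := by
    intro v hv
    have h1 := hE1 v hv
    have h2 := hUE v (Ioo_subset_Icc_self hv)
    positivity
  -- choose ε
  set G : ℝ := (pcrit γ σ2 - p) * σ2 1 with hGdef
  have hG : 0 < G := mul_pos (by linarith) hσ1
  set ε : ℝ := min (c1 / 2) (G / (p + 3)) with hεdef
  have hε : 0 < ε := lt_min (by linarith) (div_pos hG (by linarith))
  have hεc1 : ε ≤ c1 / 2 := min_le_left _ _
  have hc1ε : 0 < c1 - ε := by linarith
  have hpσ : p * σ2 1 = pcrit γ σ2 * σ2 1 - G := by ring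
  have hpc_mul : pcrit γ σ2 * σ2 1 = 2 * c1 := by
    rw [pcrit]; field_simp; exact hc1def.symm
  -- β < 1
  set β : ℝ := p * (σ2 1 + ε) / (2 * (c1 - ε)) with hβdef
  have hβ0 : 0 ≤ β := by
    apply div_nonneg
    · have : 0 ≤ σ2 1 + ε := by linarith
      positivity
    · linarith
  have hβ1 : β < 1 := by
    rw [hβdef, div_lt_one (by linarith)]
    have hεG : ε ≤ G / (p + 3) := min_le_right _ _
    have h3 : (p + 2) * ε < G := by
      have hp3 : (0:ℝ) < p + 3 := by linarith
      have := (le_div_iff₀ hp3).mp hεG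
      nlinarith
    nlinarith
  -- choose δ using continuity of σ2 and γ at 1
  have h1mem : (1:ℝ) ∈ Icc (0:ℝ) 1 := by norm_num
  obtain ⟨δ₁, hδ₁pos, hδ₁⟩ := Metric.continuousWithinAt_iff.mp (hσc.continuousWithinAt h1mem) ε hε
  obtain ⟨δ₂, hδ₂pos, hδ₂⟩ := Metric.continuousWithinAt_iff.mp (hγc.continuousWithinAt h1mem) ε hε
  set δ : ℝ := min (min (1/4) (δ₁/2)) (δ₂/2) with hδdef
  have hδpos : 0 < δ := lt_min (lt_min (by norm_num) (by linarith)) (by linarith)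
  have hδ4 : δ ≤ 1/4 := le_trans (min_le_left _ _) (min_le_left _ _)
  have hδδ₁ : δ < δ₁ := lt_of_le_of_lt (le_trans (min_le_left _ _) (min_le_right _ _)) (by linarith)
  have hδδ₂ : δ < δ₂ := lt_of_le_of_lt (min_le_right _ _) (by linarith)
  have hmemIcc : ∀ v ∈ Icc (1-δ) 1, v ∈ Icc (0:ℝ) 1 := by
    intro v hv; exact ⟨by linarith [hv.1], hv.2⟩
  have hdist : ∀ v ∈ Icc (1-δ) 1, dist v 1 < δ₁ ∧ dist v 1 < δ₂ := by
    intro v hv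
    have : dist v 1 ≤ δ := by
      rw [Real.dist_eq, abs_le]; constructor <;> linarith [hv.1, hv.2, hδpos]
    exact ⟨lt_of_le_of_lt this hδδ₁, lt_of_le_of_lt this hδδ₂⟩
  have hσb : ∀ v ∈ Icc (1-δ) 1, σ2 v ≤ σ2 1 + ε := by
    intro v hv
    have := hδ₁ (hmemIcc v hv) (hdist v hv).1
    rw [Real.dist_eq, abs_lt] at this; linarith [this.2]
  have hγb : ∀ v ∈ Icc (1-δ) 1, γ v ≤ γ 1 + ε := by
    intro v hv
    have := hδ₂ (hmemIcc v hv) (hdist v hv).2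
    rw [Real.dist_eq, abs_lt] at this; linarith [this.2]
  -- lower bound on D near 1
  have hDlb : ∀ v ∈ Icc (1-δ) 1, (c1 - ε) * (1 - v) ≤ Gam γ v - mg γ * v := by
    intro v hv
    have hv0 : (0:ℝ) ≤ v := by linarith [hv.1]
    have hadd : Gam γ v + ∫ t in v..1, γ t = Gam γ 1 :=
      intervalIntegral.integral_add_adjacent_intervals (hγint 0 v le_rfl hv0 hv.2)
        (hγint v 1 hv0 hv.2 le_rfl)
    have hGam1 : Gam γ 1 = mg γ := rfl
    have hub : (∫ t in v..1, γ t) ≤ (γ 1 + ε) * (1 - v) := by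
      have h := intervalIntegral.integral_mono_on (f := γ) (g := fun _ => γ 1 + ε)
        hv.2 (hγint v 1 hv0 hv.2 le_rfl) intervalIntegrable_const
        (fun x hx => hγb x ⟨by linarith [hx.1, hv.1], hx.2⟩)
      rwa [intervalIntegral.integral_const, smul_eq_mul, mul_comm] at h
    have : Gam γ v = mg γ - ∫ t in v..1, γ t := by rw [← hGam1]; linarith
    rw [this]
    nlinarith [hub]
  -- pointwise bound on the integrand near 1
  have hfb : ∀ v ∈ Ico (1-δ) 1, p * f₀ v ≤ β * (1 - v)⁻¹ := by
    intro v hv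
    have hv1 : 0 < 1 - v := by linarith [hv.2]
    have hDv := hDlb v ⟨hv.1, le_of_lt hv.2⟩
    have hDpos : 0 < Gam γ v - mg γ * v := lt_of_lt_of_le (by positivity) hDv
    have hσv := hσb v ⟨hv.1, le_of_lt hv.2⟩
    have key : p * σ2 v / (2 * (Gam γ v - mg γ * v)) ≤ p * (σ2 1 + ε) / (2 * ((c1 - ε) * (1 - v))) := by
      apply div_le_div₀ (by nlinarith) (mul_le_mul_of_nonneg_left hσv hp0)
        (by positivity) (by nlinarith)
    have heq : p * (σ2 1 + ε) / (2 * ((c1 - ε) * (1 - v))) = β * (1 - v)⁻¹ := by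
      have hne1 : (c1 - ε) ≠ 0 := hc1ε.ne'
      have hne2 : (1 - v) ≠ 0 := hv1.ne'
      rw [hβdef, show 2*((c1-ε)*(1-v)) = 2*(c1-ε)*(1-v) from by ring, ← div_div,
        div_eq_mul_inv]
    calc p * f₀ v = p * σ2 v / (2 * (Gam γ v - mg γ * v)) := by rw [hf₀def]; ring
      _ ≤ p * (σ2 1 + ε) / (2 * ((c1 - ε) * (1 - v))) := key
      _ = β * (1 - v)⁻¹ := heq
  -- bound Psi on (0, 1/2]
  have hPsi_left : ∀ u ∈ Ioc (0:ℝ) (1/2), Psi γ σ2 u ≤ 0 := by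
    intro u hu
    have : Psi γ σ2 u = -∫ v in u..(1/2:ℝ), f₀ v := by
      rw [hPsi u, intervalIntegral.integral_symm]
    rw [this, neg_nonpos]
    exact intervalIntegral.integral_nonneg hu.2
      (fun x hx => hf₀nn x ⟨lt_of_lt_of_le hu.1 hx.1, by linarith [hx.2]⟩)
  -- max of f₀ on [1/2, 1-δ]
  have hhalf : (1:ℝ)/2 ≤ 1 - δ := by linarith
  obtain ⟨z, hz, hzmax⟩ := isCompact_Icc.exists_isMaxOn (nonempty_Icc.mpr hhalf)
    (hf₀c (1/2) (1-δ) (by norm_num) (by linarith))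
  set B : ℝ := f₀ z with hBdef
  have hB0 : 0 ≤ B := hf₀nn z ⟨by linarith [hz.1], by linarith [hz.2]⟩
  -- bound Psi on [1/2, 1-δ]
  have hPsi_mid : ∀ u ∈ Icc ((1:ℝ)/2) (1-δ), Psi γ σ2 u ≤ B := by
    intro u hu
    have h := intervalIntegral.integral_mono_on (f := f₀) (g := fun _ => B) hu.1
      (hf₀int (1/2) u (by norm_num) hu.1 (by linarith [hu.2]))
      intervalIntegrable_const
      (fun x hx => hzmax ⟨hx.1, le_trans hx.2 hu.2⟩)
    rw [intervalIntegral.integral_const, smul_eq_mul] at h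
    have h2 : (u - 1/2) * B ≤ B := by nlinarith [hu.2]
    rw [hPsi u]; linarith
  set A : ℝ := Psi γ σ2 (1-δ) with hAdef
  -- bound on the tail
  have hPsi_tail : ∀ u ∈ Ioo (1-δ) 1,
      p * Psi γ σ2 u ≤ p * A + β * Real.log δ - β * Real.log (1-u) := by
    intro u hu
    have hu1 : 0 < 1 - u := by linarith [hu.2]
    have hsplit : Psi γ σ2 u = A + ∫ v in (1-δ)..u, f₀ v := by
      rw [hAdef, hPsi u, hPsi (1-δ)]
      have := intervalIntegral.integral_add_adjacent_intervals
        (hf₀int (1/2) (1-δ) (by norm_num) hhalf (by linarith))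
        (hf₀int (1-δ) u (by linarith) (le_of_lt hu.1) hu.2)
      linarith [this]
    have hcont_inv : IntervalIntegrable (fun v => β * (1-v)⁻¹) volume (1-δ) u := by
      apply ContinuousOn.intervalIntegrable
      apply continuousOn_const.mul
      apply ((continuous_const.sub continuous_id).continuousOn).inv₀
      intro x hx
      rw [uIcc_of_le (le_of_lt hu.1)] at hx
      have hxu : x ≤ u := hx.2
      exact ne_of_gt (show (0:ℝ) < 1 - x by nlinarith [hu.2])
    have hmono : (∫ v in (1-δ)..u, p * f₀ v) ≤ ∫ v in (1-δ)..u, β * (1-v)⁻¹ := by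
      apply intervalIntegral.integral_mono_on (le_of_lt hu.1)
        ((hf₀int (1-δ) u (by linarith) (le_of_lt hu.1) hu.2).const_mul p) hcont_inv
      intro x hx
      exact hfb x ⟨hx.1, lt_of_le_of_lt hx.2 hu.2⟩
    have hval : (∫ v in (1-δ)..u, β * (1-v)⁻¹) = β * (Real.log δ - Real.log (1-u)) := by
      rw [intervalIntegral.integral_const_mul]
      have hcomp : (∫ v in (1-δ)..u, (1-v)⁻¹) = ∫ x in (1-u)..(1-(1-δ)), x⁻¹ :=
        intervalIntegral.integral_comp_sub_left (fun x => x⁻¹) 1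
      rw [hcomp]
      have h0 : (0:ℝ) ∉ Set.uIcc (1-u) (1-(1-δ)) := by
        rw [uIcc_of_le (by linarith [hu.1])]
        intro h
        exact absurd h.1 (by linarith)
      rw [integral_inv h0]
      have : (1 : ℝ) - (1 - δ) = δ := by ring
      rw [this, Real.log_div hδpos.ne' hu1.ne']
    have hpint : p * ∫ v in (1-δ)..u, f₀ v = ∫ v in (1-δ)..u, p * f₀ v := by
      rw [intervalIntegral.integral_const_mul]
    rw [hsplit, mul_add, hpint]
    calc p * A + ∫ v in (1-δ)..u, p * f₀ v
        ≤ p * A + ∫ v in (1-δ)..u, β * (1-v)⁻¹ := by linarith [hmono]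
      _ = p * A + β * (Real.log δ - Real.log (1-u)) := by rw [hval]
      _ = p * A + β * Real.log δ - β * Real.log (1-u) := by ring
  -- global bound
  set M : ℝ := max (Real.exp (p * B)) (Real.exp (p * A + β * Real.log δ)) with hMdef
  have hM0 : 0 < M := lt_of_lt_of_le (Real.exp_pos _) (le_max_left _ _)
  have hbound : ∀ u ∈ Ioo (0:ℝ) 1, Real.exp (p * Psi γ σ2 u) ≤ M * (1-u) ^ (-β : ℝ) := by
    intro u hu
    have hu1 : 0 < 1 - u := by linarith [hu.2]
    have hu1' : 1 - u ≤ 1 := by linarith [hu.1]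
    have hrp1 : 1 ≤ (1-u) ^ (-β : ℝ) := by
      have := Real.rpow_le_rpow_of_exponent_ge hu1 hu1' (neg_nonpos.mpr hβ0)
      rwa [Real.rpow_zero] at this
    rcases le_or_gt u (1/2) with h1 | h1
    · have : p * Psi γ σ2 u ≤ p * B :=
        le_trans (mul_nonpos_of_nonneg_of_nonpos hp0 (hPsi_left u ⟨hu.1, h1⟩))
          (by positivity)
      calc Real.exp (p * Psi γ σ2 u) ≤ Real.exp (p * B) := Real.exp_le_exp.mpr this
        _ ≤ M := le_max_left _ _
        _ = M * 1 := (mul_one M).symm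
        _ ≤ M * (1-u) ^ (-β : ℝ) := by
            exact mul_le_mul_of_nonneg_left hrp1 (le_of_lt hM0)
    · rcases le_or_gt u (1-δ) with h2 | h2
      · have : p * Psi γ σ2 u ≤ p * B :=
          mul_le_mul_of_nonneg_left (hPsi_mid u ⟨le_of_lt h1, h2⟩) hp0
        calc Real.exp (p * Psi γ σ2 u) ≤ Real.exp (p * B) := Real.exp_le_exp.mpr this
          _ ≤ M := le_max_left _ _
          _ = M * 1 := (mul_one M).symm
          _ ≤ M * (1-u) ^ (-β : ℝ) := mul_le_mul_of_nonneg_left hrp1 (le_of_lt hM0)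
      · have htail := hPsi_tail u ⟨h2, hu.2⟩
        have hrpeq : (1-u) ^ (-β : ℝ) = Real.exp (-(β * Real.log (1-u))) := by
          rw [Real.rpow_def_of_pos hu1]; ring_nf
        calc Real.exp (p * Psi γ σ2 u)
            ≤ Real.exp (p * A + β * Real.log δ - β * Real.log (1-u)) :=
              Real.exp_le_exp.mpr htail
          _ = Real.exp (p * A + β * Real.log δ) * Real.exp (-(β * Real.log (1-u))) := by
              rw [← Real.exp_add]; ring_nf
          _ = Real.exp (p * A + β * Real.log δ) * (1-u) ^ (-β : ℝ) := by rw [hrpeq]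
          _ ≤ M * (1-u) ^ (-β : ℝ) := by
              apply mul_le_mul_of_nonneg_right (le_max_right _ _)
              positivity
  -- integrability of the bound
  have hint : IntegrableOn (fun u : ℝ => M * (1-u) ^ (-β : ℝ)) (Ioo 0 1) volume := by
    have h1 : IntervalIntegrable (fun x : ℝ => x ^ (-β : ℝ)) volume 0 1 :=
      intervalIntegral.intervalIntegrable_rpow' (by linarith)
    have h2 := h1.comp_sub_left 1
    simp only [sub_zero, sub_self] at h2
    have h3 : IntervalIntegrable (fun x : ℝ => (1-x) ^ (-β : ℝ)) volume 0 1 := h2.symm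
    have h4 := h3.const_mul M
    exact (intervalIntegrable_iff_integrableOn_Ioo_of_le zero_le_one).mp h4
  -- conclude
  have hmeas : Measurable (fun u : ℝ => ENNReal.ofReal (M * (1-u) ^ (-β : ℝ))) := by
    apply ENNReal.measurable_ofReal.comp
    exact (measurable_const.mul ((measurable_const.sub measurable_id).pow measurable_const))
  calc (∫⁻ u in Ioo (0:ℝ) 1, ENNReal.ofReal (Real.exp (p * Psi γ σ2 u)))
      ≤ ∫⁻ u in Ioo (0:ℝ) 1, ENNReal.ofReal (M * (1-u) ^ (-β : ℝ)) :=
        setLIntegral_mono hmeas (fun u hu => ENNReal.ofReal_le_ofReal (hbound u hu))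
    _ < ⊤ := hint.setLIntegral_lt_top
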